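/- arXiv:2005.04046 — 5 statements merged into one kernel-verified Lean document; each statement's English description precedes it below -/
import Mathlib

section
/- Let L = M ⊕ N be a Lie algebra that is a direct sum of ideals, acting on a module V. If V is a simple L-module and S is a proper nonzero simple M-submodule of V, then there exists n ∈ N such that the map s ↦ ns is an injective M-module homomorphism from S into NS. -/
/-- A submodule `U` of `V` is invariant under the ideal `M` of `L`. -/
def LieIdealInvariant {K : Type} [Field K] {L : Type} [LieRing L] [LieAlgebra K L]
    {V : Type} [AddCommGroup V] [Module K V] [LieRingModule L V] [LieModule K L V]
    (M : LieIdeal K L) (U : Submodule K V) : Prop :=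
  ∀ m ∈ M, ∀ u ∈ U, ⁅m, u⁆ ∈ U

/-- If `L = M ⊕ N` is a direct sum of ideals, `V` a simple `L`-module, and `S` a proper
nonzero simple `M`-submodule of `V`, then there is `n ∈ N` such that `s ↦ n s` is an
injective `M`-module homomorphism from `S` into `NS`. -/
theorem embedding_into_NS
    {K : Type} [Field K] {L : Type} [LieRing L] [LieAlgebra K L] [FiniteDimensional K L]
    {V : Type} [AddCommGroup V] [Module K V] [FiniteDimensional K V]
    [LieRingModule L V] [LieModule K L V]
    (M N : LieIdeal K L) (hMN : IsCompl M N)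
    (hVnt : Nontrivial V)
    (hVsimple : ∀ U : Submodule K V, (∀ x : L, ∀ u ∈ U, ⁅x, u⁆ ∈ U) → U = ⊥ ∨ U = ⊤)
    (S : Submodule K V) (hSinv : LieIdealInvariant M S)
    (hSne : S ≠ ⊥) (hSproper : S ≠ ⊤)
    (hSsimple : ∀ U : Submodule K V, U ≤ S → LieIdealInvariant M U → U = ⊥ ∨ U = S) :
    let NS : Submodule K V := sInf {U : Submodule K V |
      LieIdealInvariant M U ∧ ∀ n ∈ N, ∀ s ∈ S, ⁅n, s⁆ ∈ U}
    ∃ n ∈ N,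
      (∀ s ∈ S, ⁅n, s⁆ ∈ NS) ∧
      (∀ s ∈ S, ⁅n, s⁆ = 0 → s = 0) ∧
      (∀ m ∈ M, ∀ s ∈ S, ⁅n, ⁅m, s⁆⁆ = ⁅m, (⁅n, s⁆ : V)⁆) := by
  intro NS
  -- transverse property
  have htrans : ∀ m ∈ M, ∀ n ∈ N, ∀ v : V, ⁅n, ⁅m, v⁆⁆ = ⁅m, ⁅n, v⁆⁆ := by
    intro m hm n hn v
    have h1 : ⁅n, m⁆ ∈ M := M.lie_mem hm
    have h2 : ⁅n, m⁆ ∈ N := by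
      have : ⁅m, n⁆ ∈ N := N.lie_mem hn
      have h := neg_mem this
      rw [← lie_skew] at h
      simpa using h
    have h0 : ⁅n, m⁆ = (0 : L) := by
      have : ⁅n, m⁆ ∈ M ⊓ N := ⟨h1, h2⟩
      rw [hMN.inf_eq_bot] at this
      exact (LieSubmodule.mem_bot _).mp this
    rw [leibniz_lie, h0, zero_lie, zero_add]
  -- there exist n ∈ N, s ∈ S with ⁅n, s⁆ ≠ 0
  have hex : ∃ n ∈ N, ∃ s ∈ S, (⁅n, s⁆ : V) ≠ 0 := by
    by_contra h
    push_neg at h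
    have hLinv : ∀ x : L, ∀ u ∈ S, ⁅x, u⁆ ∈ S := by
      intro x u hu
      have hx : x ∈ M ⊔ N := by
        rw [hMN.sup_eq_top]; trivial
      obtain ⟨m, hm, n, hn, hmn⟩ := (LieSubmodule.mem_sup _ _ _).mp hx
      have hz : (⁅n, u⁆ : V) = 0 := h n hn u hu
      have : ⁅x, u⁆ = ⁅m, u⁆ + ⁅n, u⁆ := by rw [← hmn, add_lie]
      rw [this, hz, add_zero]
      exact hSinv m hm u hu
    rcases hVsimple S hLinv with h' | h'
    · exact hSne h'
    · exact hSproper h'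
  obtain ⟨n, hn, s₀, hs₀, hns₀⟩ := hex
  refine ⟨n, hn, ?_, ?_, ?_⟩
  · intro s hs
    exact Submodule.mem_sInf.mpr fun U hU => hU.2 n hn s hs
  · -- kernel is an M-invariant submodule of S, ≠ S, hence ⊥
    intro s hs hzero
    let f : V →ₗ[K] V :=
      { toFun := fun v => ⁅n, v⁆
        map_add' := fun a b => lie_add n a b
        map_smul' := fun c a => lie_smul c n a }
    let Kr : Submodule K V := S ⊓ LinearMap.ker f
    have hKle : Kr ≤ S := inf_le_left
    have hKinv : LieIdealInvariant M Kr := by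
      intro m hm u hu
      obtain ⟨huS, huK⟩ := hu
      refine ⟨hSinv m hm u huS, ?_⟩
      have hfu : (⁅n, u⁆ : V) = 0 := LinearMap.mem_ker.mp huK
      refine LinearMap.mem_ker.mpr ?_
      show (⁅n, ⁅m, u⁆⁆ : V) = 0
      rw [htrans m hm n hn u, hfu, lie_zero]
    rcases hSsimple Kr hKle hKinv with h' | h'
    · have : s ∈ Kr := ⟨hs, hzero⟩
      rw [h'] at this
      exact (Submodule.mem_bot K).mp this
    · exfalso
      have : s₀ ∈ Kr := h' ▸ hs₀
      exact hns₀ this.2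
  · intro m hm s _
    exact htrans m hm n hn s
end

section
/- Let t : V₁ × ⋯ × Vₗ → K be a nondegenerate multilinear form with dim ⟦t⟧ = 1, where ⟦t⟧ = {s multilinear forms | Der(t) ⊆ Der(s)} is the densor space of t. If Der(t) is reductive (every Der(t)-submodule of each Vₐ has a Der(t)-invariant complement), then every Vₐ is a simple Der(t)-module. -/
/-- The set of derivations of a multilinear form `t`. -/
def DerSet {K : Type} [Field K] {l : ℕ} {V : Fin l → Type}
    [∀ a, AddCommGroup (V a)] [∀ a, Module K (V a)]
    (t : MultilinearMap K V K) : Set (∀ a, Module.End K (V a)) :=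
  {δ | ∀ v : ∀ a, V a, ∑ a, t (Function.update v a (δ a (v a))) = 0}

/-- If `t` is a nondegenerate multilinear form whose densor space
`⟦t⟧ = {s | Der(t) ⊆ Der(s)}` is 1-dimensional, and every `Der(t)`-submodule of each
`Vₐ` admits a `Der(t)`-invariant complement, then every `Vₐ` is a simple
`Der(t)`-module. -/
theorem tiny_densor_simple
    {K : Type} [Field K] {l : ℕ} (V : Fin l → Type)
    [∀ a, AddCommGroup (V a)] [∀ a, Module K (V a)] [∀ a, FiniteDimensional K (V a)]
    (t : MultilinearMap K V K)
    -- nondegeneracy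
    (hnd : ∀ (a : Fin l) (w : V a),
      (∀ v : ∀ b, V b, t (Function.update v a w) = 0) → w = 0)
    -- the densor space is 1-dimensional
    (hdim : Module.finrank K
      (Submodule.span K {s : MultilinearMap K V K | DerSet t ⊆ DerSet s}) = 1)
    -- every `Der(t)`-submodule of each `Vₐ` has an invariant complement
    (hred : ∀ (a : Fin l) (U : Submodule K (V a)),
      (∀ δ ∈ DerSet t, ∀ u ∈ U, δ a u ∈ U) →
      ∃ W : Submodule K (V a), IsCompl U W ∧ ∀ δ ∈ DerSet t, ∀ w ∈ W, δ a w ∈ W) :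
    ∀ a : Fin l, Nontrivial (V a) ∧
      ∀ U : Submodule K (V a), (∀ δ ∈ DerSet t, ∀ u ∈ U, δ a u ∈ U) →
        U = ⊥ ∨ U = ⊤ := by
  intro a
  set S : Set (MultilinearMap K V K) := {s | DerSet t ⊆ DerSet s} with hS
  have htS : t ∈ S := fun δ hδ => hδ
  -- t ≠ 0
  have ht0 : t ≠ 0 := by
    intro h0
    -- every element of S is zero
    have hSz : S ⊆ {0} := by
      intro s hs
      have hδt : (Function.update (0 : ∀ b, Module.End K (V b)) a 1) ∈ DerSet t := by
        intro v; simp [h0]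
      have hδs := hs hδt
      have hzero : ∀ v : ∀ b, V b, s v = 0 := by
        intro v
        have h := hδs v
        rw [Finset.sum_eq_single a
          (fun b _ hb => by
            rw [Function.update_of_ne hb]
            simp)
          (fun h => absurd (Finset.mem_univ a) h)] at h
        simpa using h
      simp only [Set.mem_singleton_iff]
      ext v
      simp [hzero]
    have hle : Submodule.span K S ≤ ⊥ := by
      rw [← Submodule.span_zero_singleton (R := K) (M := MultilinearMap K V K)]
      exact Submodule.span_mono hSz
    rw [le_bot_iff.mp hle] at hdim
    simp at hdim
  -- every element of S is a scalar multiple of t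
  have hscal : ∀ s ∈ S, ∃ c : K, s = c • t := by
    intro s hs
    have htne : (⟨t, Submodule.subset_span htS⟩ : Submodule.span K S) ≠ 0 := by
      intro h
      exact ht0 (by simpa [Subtype.ext_iff] using h)
    obtain ⟨c, hc⟩ := (finrank_eq_one_iff_of_nonzero' (K := K) (V := Submodule.span K S) _ htne).mp hdim
      ⟨s, Submodule.subset_span hs⟩
    exact ⟨c, by simpa [Subtype.ext_iff, eq_comm] using congrArg Subtype.val hc⟩
  -- nontriviality of V a
  have hnt : Nontrivial (V a) := by
    by_contra h
    rw [not_nontrivial_iff_subsingleton] at h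
    apply ht0
    ext v
    have hva : v a = 0 := Subsingleton.elim _ _
    have : v = Function.update v a 0 := by
      rw [← hva, Function.update_eq_self]
    rw [this]
    simp
  refine ⟨hnt, ?_⟩
  intro U hU
  obtain ⟨W, hcompl, hW⟩ := hred a U hU
  set p : V a →ₗ[K] V a := U.subtype ∘ₗ U.linearProjOfIsCompl W hcompl with hp
  have hpu : ∀ u ∈ U, p u = u := fun u hu => by
    exact congrArg Subtype.val
      (Submodule.linearProjOfIsCompl_apply_left hcompl ⟨u, hu⟩)
  have hpw : ∀ w ∈ W, p w = 0 := fun w hw => by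
    simp [hp]; exact Submodule.projectionOnto_apply_of_mem_right hcompl hw
  have hpU : ∀ x, p x ∈ U := fun x => (U.linearProjOfIsCompl W hcompl x).2
  have hxW : ∀ x : V a, x - p x ∈ W := by
    intro x
    have := Submodule.projection_add_projection_eq_self hcompl x
    have hpx : p x = (U.linearProjOfIsCompl W hcompl x : V a) := rfl
    have h2 : x - p x = (W.linearProjOfIsCompl U hcompl.symm x : V a) := by
      rw [hpx]
      exact (eq_sub_of_add_eq' this).symm
    rw [h2]; exact (W.linearProjOfIsCompl U hcompl.symm x).2
  -- p commutes with each derivation in slot a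
  have hcomm : ∀ δ ∈ DerSet t, ∀ x : V a, p (δ a x) = δ a (p x) := by
    intro δ hδ x
    have hx : δ a x = δ a (p x) + δ a (x - p x) := by
      rw [← map_add]
      exact congrArg (δ a) (by abel)
    rw [hx, map_add, hpu _ (hU δ hδ _ (hpU x)), hpw _ (hW δ hδ _ (hxW x)), add_zero]
  -- the compressed form
  set s : MultilinearMap K V K :=
    t.compLinearMap (Function.update (fun b => (LinearMap.id : V b →ₗ[K] V b)) a p)
    with hsdef
  have hs : ∀ v : ∀ b, V b, s v = t (Function.update v a (p (v a))) := by
    intro v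
    rw [hsdef, MultilinearMap.compLinearMap_apply]
    congr 1
    funext b
    by_cases hb : b = a
    · subst hb; simp
    · simp [Function.update_of_ne hb]
  have hsS : s ∈ S := by
    intro δ hδ
    intro v
    have key : ∀ b : Fin l,
        s (Function.update v b (δ b (v b)))
          = t (Function.update (Function.update v a (p (v a))) b
              (δ b ((Function.update v a (p (v a))) b))) := by
      intro b
      rw [hs]
      by_cases hb : b = a
      · subst hb
        simp [Function.update_idem, hcomm δ hδ]
      · rw [Function.update_of_ne (Ne.symm hb), Function.update_of_ne hb,
          ← Function.update_comm (Ne.symm hb)]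
    calc ∑ b, s (Function.update v b (δ b (v b)))
        = ∑ b, t (Function.update (Function.update v a (p (v a))) b
            (δ b ((Function.update v a (p (v a))) b))) :=
          Finset.sum_congr rfl fun b _ => key b
      _ = 0 := hδ _
  obtain ⟨c, hc⟩ := hscal s hsS
  by_cases hc0 : c = 0
  · left
    rw [Submodule.eq_bot_iff]
    intro u hu
    apply hnd a
    intro v
    have h1 : s (Function.update v a u) = 0 := by
      rw [hc, hc0]; simp
    rw [hs] at h1
    rwa [Function.update_idem, Function.update_self, hpu u hu] at h1
  · right
    have hWbot : W = ⊥ := by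
      rw [Submodule.eq_bot_iff]
      intro w hw
      apply hnd a
      intro v
      have h1 : s (Function.update v a w) = c * t (Function.update v a w) := by
        rw [hc]; simp
      rw [hs, Function.update_idem, Function.update_self, hpw w hw] at h1
      simp only [MultilinearMap.map_update_zero] at h1
      exact (mul_eq_zero.mp h1.symm).resolve_left hc0
    rw [eq_top_iff]
    have := hcompl.codisjoint
    rw [codisjoint_iff] at this
    rw [← this, hWbot, sup_bot_eq]
end

section
/- Let t : V₁ × ⋯ × Vₗ → K be multilinear, let a ∈ {1,…,ℓ}, and let e : Vₐ → Vₐ be an idempotent linear map commuting with δₐ for every derivation δ ∈ Der(t). Then the multilinear form s defined by ⟨s|v₁,…,vₗ⟩ = ⟨t|v₁,…,e vₐ,…,vₗ⟩ satisfies Der(t) ⊆ Der(s), i.e., s lies in the densor space of t. -/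
/-- If `e : Vₐ → Vₐ` is an idempotent commuting with the `a`-th component of every
derivation of `t`, then the multilinear form `s = ⟨t|…, e vₐ, …⟩` satisfies
`Der(t) ⊆ Der(s)`, i.e. `s` lies in the densor space of `t`. -/
theorem idempotent_gives_densor_element
    {K : Type} [Field K] {l : ℕ} (V : Fin l → Type)
    [∀ a, AddCommGroup (V a)] [∀ a, Module K (V a)] [∀ a, FiniteDimensional K (V a)]
    (t : MultilinearMap K V K) (a : Fin l)
    (e : Module.End K (V a)) (he : e ∘ₗ e = e)
    (hcomm : ∀ δ ∈ DerSet t, e ∘ₗ δ a = δ a ∘ₗ e)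
    (s : MultilinearMap K V K)
    (hs : ∀ v : ∀ b, V b, s v = t (Function.update v a (e (v a)))) :
    DerSet t ⊆ DerSet s := by
  intro δ hδ v
  set w : ∀ b, V b := Function.update v a (e (v a)) with hw
  have key : ∀ b, s (Function.update v b (δ b (v b))) =
      t (Function.update w b (δ b (w b))) := by
    intro b
    rw [hs]
    by_cases hb : b = a
    · subst hb
      have h2 : e (δ b (v b)) = δ b (e (v b)) :=
        LinearMap.ext_iff.mp (hcomm δ hδ) (v b)
      simp [hw, Function.update_idem, h2]
    · rw [Function.update_comm hb, Function.update_of_ne (Ne.symm hb), hw,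
        Function.update_of_ne hb]
  calc ∑ b, s (Function.update v b (δ b (v b)))
      = ∑ b, t (Function.update w b (δ b (w b))) := by
        exact Finset.sum_congr rfl fun b _ => key b
    _ = 0 := hδ w
end

section
/- Let λ and μ be partitions with at most n parts and let Y, Y' be the corresponding Young diagrams. With μ = (2, 1, …, 1) a partition of n+1 (one part equal to 2 and n−1 parts equal to 1), the Littlewood–Richardson coefficient c^λ_{λ,μ} for sl_{n+1} equals the number of distinct positive part sizes of λ: c^λ_{λ,μ} = |{λᵢ | 1 ≤ i ≤ n, λᵢ > 0}|. -/
/-- One step of the crystal operation `Y ↦ Y[j]` on partitions with `n` parts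
(eq. (row-insert)): for `j ≤ n` add a box to row `j`, for `j = n+1` remove a box from
every row; the result must again be a partition (else `none`). -/
def diagStep {n : ℕ} (p : Fin n → ℕ) (b : Fin (n + 1)) : Option (Fin n → ℕ) :=
  if h : (b : ℕ) < n then
    let q := Function.update p ⟨b, h⟩ (p ⟨b, h⟩ + 1)
    if ∀ i j : Fin n, i ≤ j → q j ≤ q i then some q else none
  else
    if ∀ i, 0 < p i then some (fun i => p i - 1) else none

/-- Iterated crystal operation `Y ↦ Y[b₁, …, b_m]`, failing if any intermediate step
does not produce a Young diagram. -/
def diagSteps {n : ℕ} (p : Fin n → ℕ) : List (Fin (n + 1)) → Option (Fin n → ℕ)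
  | [] => some p
  | b :: bs => (diagStep p b).bind fun q => diagSteps q bs

section Aux

variable {m : ℕ}

lemma diagStep_cast (p : Fin (m + 1) → ℕ) (r : Fin (m + 1)) :
    diagStep p r.castSucc =
      if ∀ i j : Fin (m + 1), i ≤ j → Function.update p r (p r + 1) j ≤
          Function.update p r (p r + 1) i then
        some (Function.update p r (p r + 1)) else none := by
  have h : ((r.castSucc : Fin (m + 2)) : ℕ) < m + 1 := r.isLt
  have hr : (⟨((r.castSucc : Fin (m + 2)) : ℕ), h⟩ : Fin (m + 1)) = r := by
    ext; simp
  rw [diagStep, dif_pos h, hr]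

lemma diagStep_last (p : Fin (m + 1) → ℕ) :
    diagStep p (Fin.last (m + 1)) =
      if ∀ i, 0 < p i then some (fun i => p i - 1) else none := by
  rw [diagStep, dif_neg (by simp)]

lemma diagStep_elim {p q : Fin (m + 1) → ℕ} {b : Fin (m + 2)}
    (h : diagStep p b = some q) :
    (∃ r : Fin (m + 1), b = r.castSucc ∧
      (∀ i j : Fin (m + 1), i ≤ j → q j ≤ q i) ∧
      q = Function.update p r (p r + 1)) ∨
    (b = Fin.last (m + 1) ∧ (∀ i, 0 < p i) ∧ q = fun i => p i - 1) := by
  rcases Fin.eq_castSucc_or_eq_last b with ⟨r, rfl⟩ | rfl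
  · left
    rw [diagStep_cast] at h
    by_cases hc : ∀ i j : Fin (m + 1), i ≤ j → Function.update p r (p r + 1) j ≤
        Function.update p r (p r + 1) i
    · rw [if_pos hc] at h
      obtain rfl : Function.update p r (p r + 1) = q := Option.some_injective _ h
      exact ⟨r, rfl, hc, rfl⟩
    · rw [if_neg hc] at h; exact absurd h (by simp)
  · right
    rw [diagStep_last] at h
    by_cases hc : ∀ i, 0 < p i
    · rw [if_pos hc] at h
      obtain rfl : (fun i => p i - 1) = q := Option.some_injective _ h
      exact ⟨rfl, hc, rfl⟩
    · rw [if_neg hc] at h; exact absurd h (by simp)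

lemma update_cast_sum (p : Fin (m + 1) → ℕ) (r : Fin (m + 1)) :
    (∑ i, ((Function.update p r (p r + 1)) i : ℤ)) = (∑ i, (p i : ℤ)) + 1 := by
  have h : ∀ i, ((Function.update p r (p r + 1)) i : ℤ) =
      (p i : ℤ) + if i = r then 1 else 0 := by
    intro i
    by_cases hi : i = r
    · subst hi; simp
    · simp [Function.update_of_ne hi, hi]
  simp only [h, Finset.sum_add_distrib, Finset.sum_ite_eq' Finset.univ r fun _ => (1:ℤ)]
  simp

/-- sum bookkeeping over a run -/
lemma diagSteps_sum (l : List (Fin (m + 2))) :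
    ∀ p q : Fin (m + 1) → ℕ, diagSteps p l = some q →
      (∑ i, (q i : ℤ)) + (m + 2) * l.count (Fin.last (m + 1)) =
        (∑ i, (p i : ℤ)) + l.length := by
  induction l with
  | nil =>
    intro p q h
    simp only [diagSteps] at h
    obtain rfl := Option.some_injective _ h
    simp
  | cons b bs ih =>
    intro p q h
    simp only [diagSteps] at h
    obtain ⟨q₁, hq₁, hrest⟩ := Option.bind_eq_some_iff.mp h
    have key := ih q₁ q hrest
    rcases diagStep_elim hq₁ with ⟨r, rfl, -, rfl⟩ | ⟨rfl, hpos, rfl⟩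
    · have hsum := update_cast_sum p r
      have hcount : (r.castSucc :: bs).count (Fin.last (m+1)) =
          bs.count (Fin.last (m+1)) := by
        simp [List.count_cons, (Fin.castSucc_lt_last r).ne]
      rw [hcount]
      rw [hsum] at key
      push_cast [List.length_cons] at key ⊢
      linarith
    · have hsum : (∑ i, ((fun i => p i - 1) (i : Fin (m+1)) : ℤ)) =
          (∑ i, (p i : ℤ)) - (m + 1) := by
        have h1 : ∀ i : Fin (m + 1), ((p i - 1 : ℕ) : ℤ) = (p i : ℤ) - 1 := by
          intro i
          have := hpos i
          omega
        simp only [h1, Finset.sum_sub_distrib]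
        simp
      have hcount : (Fin.last (m+1) :: bs).count (Fin.last (m+1)) =
          bs.count (Fin.last (m+1)) + 1 := by
        simp [List.count_cons]
      rw [hcount]
      rw [hsum] at key
      push_cast [List.length_cons] at key ⊢
      linarith

lemma diagSteps_append (l₁ l₂ : List (Fin (m + 2))) :
    ∀ p : Fin (m + 1) → ℕ, diagSteps p (l₁ ++ l₂) =
      (diagSteps p l₁).bind fun q => diagSteps q l₂ := by
  induction l₁ with
  | nil => intro p; simp [diagSteps]
  | cons b bs ih =>
    intro p
    simp only [List.cons_append, diagSteps]
    cases diagStep p b with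
    | none => simp
    | some q => simp [ih q]

/-- result of a successful all-additions run, via counts -/
lemma diagSteps_adds (l : List (Fin (m + 1))) :
    ∀ p q : Fin (m + 1) → ℕ, diagSteps p (l.map Fin.castSucc) = some q →
      ∀ i, q i = p i + l.count i := by
  induction l with
  | nil =>
    intro p q h i
    simp only [List.map_nil, diagSteps] at h
    obtain rfl := Option.some_injective _ h
    simp
  | cons r rs ih =>
    intro p q h i
    simp only [List.map_cons, diagSteps] at h
    obtain ⟨q₁, hq₁, hrest⟩ := Option.bind_eq_some_iff.mp h
    rcases diagStep_elim hq₁ with ⟨r', hr', -, rfl⟩ | ⟨hlast, -, -⟩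
    · obtain rfl : r' = r := Fin.castSucc_injective _ hr'.symm
      have := ih _ _ hrest i
      rw [this]
      by_cases hi : i = r'
      · subst hi
        simp [List.count_cons, Function.update_self]
        omega
      · simp [List.count_cons, Function.update_of_ne hi, hi, Ne.symm hi]
    · exact absurd hlast (Fin.castSucc_lt_last r).ne

/-- a strictly-increasing sequence of row additions succeeds, provided each added row
either has the row above also added (earlier) or strictly shorter than the row above -/
lemma diagSteps_addRun : ∀ (N : ℕ) (g : Fin N → Fin (m + 1)) (p : Fin (m + 1) → ℕ),
    (∀ i j : Fin (m + 1), i ≤ j → p j ≤ p i) →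
    StrictMono g →
    (∀ (j : Fin N) (i : Fin (m + 1)), (i : ℕ) + 1 = (g j : ℕ) →
      (∃ j', g j' = i) ∨ p (g j) < p i) →
    diagSteps p ((List.ofFn g).map Fin.castSucc) =
      some (fun i => p i + if ∃ j, g j = i then 1 else 0) := by
  intro N
  induction N with
  | zero =>
    intro g p hp hg H
    simp only [List.ofFn_zero, List.map_nil, diagSteps]
    have he : (fun i => p i + if ∃ j : Fin 0, g j = i then 1 else 0) = p := by
      funext i; simp
    rw [he]
  | succ N ih =>
    intro g p hp hg H
    set q₁ := Function.update p (g 0) (p (g 0) + 1) with hq₁def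
    have hfirst : ∀ i : Fin (m + 1), i < g 0 → p (g 0) < p i := by
      intro i hi
      have hpos : 0 < (g 0 : ℕ) := lt_of_le_of_lt (Nat.zero_le _) hi
      set i₀ : Fin (m + 1) := ⟨(g 0 : ℕ) - 1, by omega⟩ with hi₀def
      have hi₀ : (i₀ : ℕ) + 1 = (g 0 : ℕ) := by simp [hi₀def]; omega
      rcases H 0 i₀ hi₀ with ⟨j', hj'⟩ | hlt
      · exfalso
        have : g j' < g 0 := by
          rw [hj', Fin.lt_def]; show (g 0 : ℕ) - 1 < (g 0 : ℕ); omega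
        exact absurd (hg.lt_iff_lt.mp this) (Fin.not_lt_zero j')
      · calc p (g 0) < p i₀ := hlt
          _ ≤ p i := hp i i₀ (by rw [Fin.le_def]; simp [hi₀def]; omega)
    have hq₁ : ∀ i j : Fin (m + 1), i ≤ j → q₁ j ≤ q₁ i := by
      intro i j hij
      by_cases hj : j = g 0
      · subst hj
        by_cases hi' : i = g 0
        · subst hi'; exact le_refl _
        · have hlt : i < g 0 := lt_of_le_of_ne hij hi'
          rw [hq₁def, Function.update_self, Function.update_of_ne hi']
          exact Nat.succ_le_of_lt (hfirst i hlt)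
      · rw [hq₁def, Function.update_of_ne hj]
        by_cases hi' : i = g 0
        · subst hi'
          rw [Function.update_self]
          exact le_trans (hp _ _ hij) (Nat.le_succ _)
        · rw [Function.update_of_ne hi']
          exact hp _ _ hij
    have hstep : diagStep p (g 0).castSucc = some q₁ := by
      rw [diagStep_cast, if_pos hq₁]
    have hne0 : ∀ j : Fin N, g j.succ ≠ g 0 := by
      intro j e
      exact absurd (hg.injective e) (Fin.succ_ne_zero j)
    have hg' : StrictMono (fun j : Fin N => g j.succ) :=
      fun a b h => hg (Fin.succ_lt_succ_iff.mpr h)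
    have H' : ∀ (j : Fin N) (i : Fin (m + 1)), (i : ℕ) + 1 = (g j.succ : ℕ) →
        (∃ j' : Fin N, g j'.succ = i) ∨ q₁ (g j.succ) < q₁ i := by
      intro j i hij
      have hile : i ≤ g j.succ := by rw [Fin.le_def]; omega
      rcases H j.succ i hij with ⟨j', hj'⟩ | hlt
      · by_cases hj0 : j' = 0
        · subst hj0
          right
          rw [hq₁def, Function.update_of_ne (hne0 j), ← hj', Function.update_self]
          calc p (g j.succ) ≤ p (g 0) := by rw [hj']; exact hp _ _ hile
            _ < p (g 0) + 1 := Nat.lt_succ_self _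
        · left
          exact ⟨Fin.pred j' hj0, by rwa [Fin.succ_pred]⟩
      · right
        rw [hq₁def, Function.update_of_ne (hne0 j)]
        calc p (g j.succ) < p i := hlt
          _ ≤ q₁ i := by
            rw [hq₁def]
            by_cases hi' : i = g 0
            · subst hi'; rw [Function.update_self]; exact Nat.le_succ _
            · rw [Function.update_of_ne hi']
    have hrest := ih (fun j => g j.succ) q₁ hq₁ hg' H'
    rw [List.ofFn_succ, List.map_cons]
    simp only [diagSteps]
    rw [hstep, Option.bind_some, hrest]
    congr 1
    funext i
    by_cases hi : i = g 0
    · subst hi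
      have h1 : ¬∃ j : Fin N, g j.succ = g 0 := by
        rintro ⟨j, hj⟩; exact hne0 j hj
      have h2 : ∃ j : Fin (N + 1), g j = g 0 := ⟨0, rfl⟩
      rw [hq₁def, Function.update_self, if_neg h1, if_pos h2]
    · have h3 : (∃ j : Fin N, g j.succ = i) ↔ ∃ j : Fin (N + 1), g j = i := by
        constructor
        · rintro ⟨j, hj⟩; exact ⟨j.succ, hj⟩
        · rintro ⟨j, hj⟩
          have hj0 : j ≠ 0 := by rintro rfl; exact hi hj.symm
          exact ⟨Fin.pred j hj0, by rwa [Fin.succ_pred]⟩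
      rw [hq₁def, Function.update_of_ne hi]
      by_cases h4 : ∃ j : Fin N, g j.succ = i
      · rw [if_pos h4, if_pos (h3.mp h4)]
      · rw [if_neg h4, if_neg (fun h => h4 (h3.mpr h))]

lemma strictMono_eq_succAbove {a : Fin (m + 1) → Fin (m + 2)} (ha : StrictMono a) :
    ∃ k : Fin (m + 2), a = Fin.succAbove k := by
  have hns : ¬ Function.Surjective a := by
    intro hs
    have := Fintype.card_le_of_surjective a hs
    simp at this
  simp only [Function.Surjective, not_forall] at hns
  obtain ⟨k, hk⟩ := hns
  rw [not_exists] at hk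
  have hsub : Set.range a ⊆ {k}ᶜ := by
    rintro x ⟨j, rfl⟩
    exact fun e => hk j e
  have hr : Set.range a = Set.range (Fin.succAbove k) := by
    rw [Fin.range_succAbove]
    refine Set.eq_of_subset_of_ncard_le hsub ?_ (Set.toFinite _)
    have h1 : (Set.range a).ncard = m + 1 := by
      rw [← Nat.card_coe_set_eq, Nat.card_range_of_injective ha.injective]
      simp
    have h2 : ({k}ᶜ : Set (Fin (m + 2))).ncard ≤ m + 1 := by
      have := Set.ncard_add_ncard_compl ({k} : Set (Fin (m + 2)))
      rw [Set.ncard_singleton, Nat.card_eq_fintype_card, Fintype.card_fin] at this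
      omega
    omega
  exact ⟨k, (StrictMono.range_inj ha (Fin.strictMono_succAbove k)).mp hr⟩

lemma succAbove_val_le (p : Fin (m + 2)) (i : Fin (m + 1)) :
    (p.succAbove i : ℕ) ≤ (i : ℕ) + 1 := by
  rcases Fin.lt_or_le i.castSucc p with h | h
  · rw [Fin.succAbove_of_castSucc_lt _ _ h]; simp
  · rw [Fin.succAbove_of_le_castSucc _ _ h]; simp

/-- the rows added by the column part of the tableau, for pivot `castSucc k'` -/
def rowsB (k' : Fin (m + 1)) (j : Fin m) : Fin (m + 1) :=
  ⟨((k'.castSucc).succAbove j.castSucc : ℕ), by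
    have h1 := succAbove_val_le k'.castSucc j.castSucc
    have h2 := j.isLt
    simp only [Fin.coe_castSucc] at h1
    omega⟩

lemma castSucc_rowsB (k' : Fin (m + 1)) (j : Fin m) :
    (rowsB k' j).castSucc = (k'.castSucc).succAbove j.castSucc := by
  ext; simp [rowsB]

lemma rowsB_ne (k' : Fin (m + 1)) (j : Fin m) : rowsB k' j ≠ k' := by
  intro h
  have := castSucc_rowsB k' j
  rw [h] at this
  exact Fin.succAbove_ne _ _ this.symm

lemma rowsB_strictMono (k' : Fin (m + 1)) : StrictMono (rowsB k') := by
  intro a b h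
  rw [← Fin.castSucc_lt_castSucc_iff, castSucc_rowsB, castSucc_rowsB]
  exact (Fin.strictMono_succAbove _) (Fin.castSucc_lt_castSucc_iff.mpr h)

lemma rowsB_surj (k' : Fin (m + 1)) {x : Fin (m + 1)} (hx : x ≠ k') :
    ∃ j, rowsB k' j = x := by
  obtain ⟨z, hz⟩ := Fin.exists_succAbove_eq
    (show x.castSucc ≠ k'.castSucc from fun e => hx (Fin.castSucc_injective _ e))
  have hzlast : z ≠ Fin.last m := by
    rintro rfl
    rw [Fin.succAbove_of_le_castSucc _ _ (by
      rw [Fin.le_def]; simp; omega), Fin.succ_last] at hz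
    exact (Fin.castSucc_lt_last x).ne hz.symm
  rcases Fin.eq_castSucc_or_eq_last z with ⟨z', rfl⟩ | rfl
  · exact ⟨z', Fin.castSucc_injective _ (by rw [castSucc_rowsB, hz])⟩
  · exact absurd rfl hzlast

lemma succAbove_castSucc_last (k' : Fin (m + 1)) :
    (k'.castSucc).succAbove (Fin.last m) = Fin.last (m + 1) := by
  rw [Fin.succAbove_of_le_castSucc _ _ (by rw [Fin.le_def]; simp; omega), Fin.succ_last]

lemma list_decomp (k' : Fin (m + 1)) :
    List.ofFn (Fin.succAbove (Fin.castSucc k')) =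
      (List.ofFn (rowsB k')).map Fin.castSucc ++ [Fin.last (m + 1)] := by
  rw [List.ofFn_succ' (f := Fin.succAbove (Fin.castSucc k')), List.concat_eq_append,
    List.map_ofFn]
  have hc : (Fin.castSucc ∘ rowsB k') = fun i : Fin m => (k'.castSucc).succAbove i.castSucc :=
    funext fun j => castSucc_rowsB k' j
  rw [hc, succAbove_castSucc_last]

/-- the "good pivots": `k = last` iff all parts positive; `k ≤ m` iff there is a
descent of `lam` across position `k` -/
def Good (lam : Fin (m + 1) → ℕ) (k : Fin (m + 2)) : Prop :=
  if h : (k : ℕ) < m + 1 then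
    0 < (k : ℕ) ∧ lam ⟨(k : ℕ), h⟩ < lam ⟨(k : ℕ) - 1, by omega⟩
  else ∀ i, 0 < lam i

section Main

variable (lam : Fin (m + 1) → ℕ) (hlam : ∀ i j : Fin (m + 1), i ≤ j → lam j ≤ lam i)

include hlam

lemma run_of_good_last (hpos : ∀ i, 0 < lam i) :
    diagSteps lam (Fin.last (m + 1) :: List.ofFn (Fin.succAbove (Fin.last (m + 1)))) =
      some lam := by
  simp only [diagSteps]
  rw [diagStep_last, if_pos hpos, Option.bind_some, Fin.succAbove_last]
  have hofn : List.ofFn (Fin.castSucc : Fin (m + 1) → Fin (m + 2)) =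
      (List.ofFn (fun j : Fin (m + 1) => j)).map Fin.castSucc := by
    rw [List.map_ofFn]; rfl
  rw [hofn]
  rw [diagSteps_addRun (m + 1) (fun j => j) (fun i => lam i - 1)
    (fun i j hij => Nat.sub_le_sub_right (hlam i j hij) 1)
    (fun a b h => h)
    (fun j i _ => Or.inl ⟨i, rfl⟩)]
  congr 1
  funext i
  rw [if_pos ⟨i, rfl⟩]
  have := hpos i
  omega

lemma run_of_good_castSucc (k' : Fin (m + 1)) (h0 : 0 < (k' : ℕ))
    (hdesc : lam k' < lam ⟨(k' : ℕ) - 1, by omega⟩) :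
    diagSteps lam (k'.castSucc :: List.ofFn (Fin.succAbove k'.castSucc)) = some lam := by
  have hq₁ : ∀ i j : Fin (m + 1), i ≤ j →
      Function.update lam k' (lam k' + 1) j ≤ Function.update lam k' (lam k' + 1) i := by
    intro i j hij
    by_cases hj : j = k'
    · by_cases hi : i = k'
      · rw [hj, hi]
      · rw [hj, Function.update_self, Function.update_of_ne hi]
        have hik : (i : ℕ) < (k' : ℕ) := by
          have h1 := Fin.le_def.mp hij
          have h2 : (i : ℕ) ≠ (k' : ℕ) := fun e => hi (Fin.ext e)
          have h3 := Fin.le_def.mp (le_of_eq hj)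
          omega
        calc lam k' + 1 ≤ lam ⟨(k' : ℕ) - 1, by omega⟩ := hdesc
          _ ≤ lam i := hlam _ _ (by rw [Fin.le_def]; simp; omega)
    · rw [Function.update_of_ne hj]
      by_cases hi : i = k'
      · rw [hi, Function.update_self]
        rw [hi] at hij
        exact le_trans (hlam _ _ hij) (Nat.le_succ _)
      · rw [Function.update_of_ne hi]
        exact hlam _ _ hij
  set q₁ := Function.update lam k' (lam k' + 1) with hq₁def
  rw [list_decomp, ← List.cons_append, diagSteps_append]
  have hstep : diagSteps lam (k'.castSucc :: (List.ofFn (rowsB k')).map Fin.castSucc) =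
      some (fun i => lam i + 1) := by
    simp only [diagSteps]
    rw [diagStep_cast, if_pos hq₁, Option.bind_some]
    rw [diagSteps_addRun m (rowsB k') q₁ hq₁ (rowsB_strictMono k') ?_]
    · congr 1
      funext i
      by_cases hi : i = k'
      · have hnr : ¬∃ j, rowsB k' j = k' := by rintro ⟨j, hj⟩; exact rowsB_ne k' j hj
        rw [hi, hq₁def, if_neg hnr, Function.update_self]
      · rw [hq₁def, if_pos (rowsB_surj k' hi), Function.update_of_ne hi]
    · intro j i hij
      by_cases hi : i = k'
      · right
        rw [hi] at hij
        rw [hi, hq₁def, Function.update_of_ne (rowsB_ne k' j), Function.update_self]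
        calc lam (rowsB k' j) ≤ lam k' := hlam _ _ (by rw [Fin.le_def]; omega)
          _ < lam k' + 1 := Nat.lt_succ_self _
      · exact Or.inl (rowsB_surj k' hi)
  rw [hstep, Option.bind_some]
  simp only [diagSteps]
  rw [diagStep_last, if_pos (fun i => Nat.succ_pos _), Option.bind_some]
  simp

end Main

lemma count_last_ofFn_castSucc :
    (List.ofFn (Fin.castSucc : Fin (m + 1) → Fin (m + 2))).count (Fin.last (m + 1)) = 0 := by
  rw [List.count_eq_zero]
  intro hmem
  rw [List.mem_ofFn] at hmem
  obtain ⟨j, hj⟩ := hmem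
  exact (Fin.castSucc_lt_last j).ne hj

lemma count_last_map_castSucc (l : List (Fin (m + 1))) :
    (l.map Fin.castSucc).count (Fin.last (m + 1)) = 0 := by
  rw [List.count_eq_zero]
  intro hmem
  rw [List.mem_map] at hmem
  obtain ⟨x, -, hx⟩ := hmem
  exact (Fin.castSucc_lt_last x).ne hx

lemma good_of_run (lam : Fin (m + 1) → ℕ) (d k : Fin (m + 2))
    (h0d : Fin.succAbove k 0 ≤ d)
    (hrun : diagSteps lam (d :: List.ofFn (Fin.succAbove k)) = some lam) :
    d = k ∧ Good lam k := by
  have hsum := diagSteps_sum (d :: List.ofFn (Fin.succAbove k)) lam lam hrun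
  have hlen : (d :: List.ofFn (Fin.succAbove k)).length = m + 2 := by simp
  rw [hlen] at hsum
  have hcnt : ((d :: List.ofFn (Fin.succAbove k)).count (Fin.last (m + 1)) : ℤ) = 1 := by
    have h2 : ((m : ℤ) + 2) * ((d :: List.ofFn (Fin.succAbove k)).count (Fin.last (m + 1))) =
        ((m : ℤ) + 2) * 1 := by push_cast at hsum ⊢; linarith
    exact mul_left_cancel₀ (by positivity) h2
  have hcnt' : (d :: List.ofFn (Fin.succAbove k)).count (Fin.last (m + 1)) = 1 := by
    exact_mod_cast hcnt
  rcases Fin.eq_castSucc_or_eq_last k with ⟨k', rfl⟩ | rfl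
  · -- pivot k = castSucc k'
    have hc1 : (List.ofFn (Fin.succAbove k'.castSucc)).count (Fin.last (m + 1)) = 1 := by
      rw [list_decomp, List.count_append, count_last_map_castSucc]
      simp
    have hd : d ≠ Fin.last (m + 1) := by
      intro hdl
      rw [hdl, List.count_cons, hc1] at hcnt'
      simp at hcnt'
    obtain ⟨d', rfl⟩ : ∃ d' : Fin (m + 1), d = d'.castSucc := by
      rcases Fin.eq_castSucc_or_eq_last d with ⟨d', rfl⟩ | rfl
      · exact ⟨d', rfl⟩
      · exact absurd rfl hd
    -- decompose the run
    rw [list_decomp, ← List.cons_append, diagSteps_append] at hrun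
    obtain ⟨q, hq, hlast⟩ := Option.bind_eq_some_iff.mp hrun
    -- the last step is the subtraction
    simp only [diagSteps] at hlast
    obtain ⟨q', hq', hq''⟩ := Option.bind_eq_some_iff.mp hlast
    have hql : lam = q' := (Option.some_injective _ hq'').symm
    subst hql
    rcases diagStep_elim hq' with ⟨r, hr, -, -⟩ | ⟨-, hpos, heq⟩
    · exact absurd hr.symm (Fin.castSucc_lt_last r).ne
    -- count bookkeeping for the additions
    have hadds : ∀ i, q i = lam i + (d' :: List.ofFn (rowsB k')).count i := by
      intro i
      have := diagSteps_adds (d' :: List.ofFn (rowsB k')) lam q (by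
        rw [List.map_cons]; exact hq) i
      exact this
    have hq_eq : ∀ i, q i = lam i + 1 := by
      intro i
      have h1 := congrFun heq i
      have h2 := hpos i
      omega
    have hcount1 : ∀ i, (d' :: List.ofFn (rowsB k')).count i = 1 := by
      intro i
      have := hadds i
      rw [hq_eq i] at this
      omega
    have hnotmem : (k' : Fin (m + 1)) ∉ List.ofFn (rowsB k') := by
      intro hmem
      rw [List.mem_ofFn] at hmem
      obtain ⟨j, hj⟩ := hmem
      exact rowsB_ne k' j hj
    have hdk : d' = k' := by
      have := hcount1 k'
      rw [List.count_cons, List.count_eq_zero.mpr hnotmem] at this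
      by_cases h : d' = k'
      · exact h
      · simp [List.count_cons, h] at this
    refine ⟨congrArg Fin.castSucc hdk, ?_⟩
    -- positivity of the pivot
    have h0 : 0 < (k' : ℕ) := by
      by_contra h0
      have hk0 : k' = 0 := by
        apply Fin.ext
        simp only [Fin.val_zero]
        omega
      rw [hk0, Fin.castSucc_zero] at h0d
      rw [Fin.succAbove_of_le_castSucc _ _ (by rw [Fin.castSucc_zero])] at h0d
      have hv := Fin.le_def.mp h0d
      rw [hdk, hk0] at hv
      simp at hv
    -- the descent, from the first addition being legal
    simp only [List.map_cons, diagSteps] at hq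
    obtain ⟨q₁, hq₁, -⟩ := Option.bind_eq_some_iff.mp hq
    rcases diagStep_elim hq₁ with ⟨r, hr, hcond, hq₁eq⟩ | ⟨hl, -, -⟩
    · have hrk : r = k' := (Fin.castSucc_injective _ hr.symm).trans hdk
      rw [hrk] at hq₁eq
      have hdesc := hcond ⟨(k' : ℕ) - 1, by omega⟩ k' (by rw [Fin.le_def]; exact Nat.sub_le _ _)
      rw [hq₁eq, Function.update_self,
        Function.update_of_ne (by intro e; have := congrArg Fin.val e; simp at this; omega)]
        at hdesc
      rw [Good, dif_pos (show ((k'.castSucc : Fin (m + 2)) : ℕ) < m + 1 by rw [Fin.coe_castSucc]; exact k'.isLt)]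
      constructor
      · simpa using h0
      · have e1 : (⟨((k'.castSucc : Fin (m + 2)) : ℕ), by rw [Fin.coe_castSucc]; exact k'.isLt⟩ : Fin (m + 1)) = k' :=
          Fin.ext (by simp)
        rw [e1]
        have e2 : (⟨((k'.castSucc : Fin (m + 2)) : ℕ) - 1, by omega⟩ : Fin (m + 1)) =
            (⟨(k' : ℕ) - 1, by omega⟩ : Fin (m + 1)) := Fin.ext (by simp)
        rw [e2]
        omega
    · exact absurd hl (Fin.castSucc_lt_last d').ne
  · -- pivot k = last
    rw [Fin.succAbove_last] at hrun hcnt'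
    have hd : d = Fin.last (m + 1) := by
      rw [List.count_cons, count_last_ofFn_castSucc] at hcnt'
      by_cases h : d = Fin.last (m + 1)
      · exact h
      · simp [h] at hcnt'
    subst hd
    refine ⟨rfl, ?_⟩
    simp only [diagSteps] at hrun
    obtain ⟨q₁, hq₁, -⟩ := Option.bind_eq_some_iff.mp hrun
    rcases diagStep_elim hq₁ with ⟨r, hr, -, -⟩ | ⟨-, hpos, -⟩
    · exact absurd hr.symm (Fin.castSucc_lt_last r).ne
    · rw [Good, dif_neg (by simp)]
      exact hpos

lemma good_pos (lam : Fin (m + 1) → ℕ) {k : Fin (m + 2)} (h : Good lam k) : 0 < (k : ℕ) := by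
  rw [Good] at h
  by_cases hk : (k : ℕ) < m + 1
  · rw [dif_pos hk] at h; exact h.1
  · omega

open Classical in
lemma good_card (lam : Fin (m + 1) → ℕ) (hlam : Antitone lam) :
    (Finset.univ.filter fun k => Good lam k).card =
      ((Finset.univ.image lam).filter fun x => 0 < x).card := by
  refine Finset.card_bij (fun k _ => lam ⟨(k : ℕ) - 1, by omega⟩) ?_ ?_ ?_
  · -- maps into target
    intro k hk
    rw [Finset.mem_filter] at hk
    have hg := hk.2
    rw [Finset.mem_filter]
    refine ⟨Finset.mem_image_of_mem lam (Finset.mem_univ _), ?_⟩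
    rw [Good] at hg
    by_cases hlt : (k : ℕ) < m + 1
    · rw [dif_pos hlt] at hg
      calc 0 ≤ lam ⟨(k : ℕ), hlt⟩ := Nat.zero_le _
        _ < lam ⟨(k : ℕ) - 1, by omega⟩ := hg.2
    · rw [dif_neg hlt] at hg
      exact hg _
  · -- injective
    intro a ha b hb heq
    rw [Finset.mem_filter] at ha hb
    have hga := ha.2
    have hgb := hb.2
    by_contra hne
    have hvne : (a : ℕ) ≠ (b : ℕ) := fun e => hne (Fin.ext e)
    -- wlog a < b
    have key : ∀ x y : Fin (m + 2), Good lam x → Good lam y → (x : ℕ) < (y : ℕ) →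
        lam ⟨(y : ℕ) - 1, by omega⟩ < lam ⟨(x : ℕ) - 1, by omega⟩ := by
      intro x y hgx hgy hxy
      have hx0 := good_pos lam hgx
      have hxlt : (x : ℕ) < m + 1 := by
        have := y.isLt
        omega
      rw [Good, dif_pos hxlt] at hgx
      calc lam ⟨(y : ℕ) - 1, by omega⟩ ≤ lam ⟨(x : ℕ), hxlt⟩ := by
            apply hlam
            rw [Fin.le_def]
            simp
            omega
        _ < lam ⟨(x : ℕ) - 1, by omega⟩ := hgx.2
    rcases Nat.lt_or_ge (a : ℕ) (b : ℕ) with h | h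
    · exact absurd heq (Nat.ne_of_gt (key a b hga hgb h))
    · exact absurd heq (Nat.ne_of_lt (key b a hgb hga (by omega)))
  · -- surjective
    intro v hv
    rw [Finset.mem_filter] at hv
    obtain ⟨hvim, hvpos⟩ := hv
    rw [Finset.mem_image] at hvim
    obtain ⟨j, -, hj⟩ := hvim
    set F' : Finset (Fin (m + 1)) := Finset.univ.filter fun i => lam i = v with hF'
    have hne : F'.Nonempty := ⟨j, by simp [hF', hj]⟩
    set j₀ := F'.max' hne with hj₀
    have hj₀mem : j₀ ∈ F' := F'.max'_mem hne
    have hj₀v : lam j₀ = v := by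
      have := hj₀mem
      rw [hF', Finset.mem_filter] at this
      exact this.2
    have hj₀max : ∀ x ∈ F', x ≤ j₀ := fun x hx => F'.le_max' x hx
    by_cases hcase : (j₀ : ℕ) = m
    · refine ⟨Fin.last (m + 1), ?_, ?_⟩
      · rw [Finset.mem_filter]
        refine ⟨Finset.mem_univ _, ?_⟩
        rw [Good, dif_neg (by simp)]
        intro i
        calc 0 < v := hvpos
          _ = lam j₀ := hj₀v.symm
          _ ≤ lam i := hlam (by rw [Fin.le_def]; have := i.isLt; omega)
      · convert hj₀v using 2
        apply Fin.ext
        simp [hcase]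
    · have hlt : (j₀ : ℕ) + 1 < m + 1 := by have := j₀.isLt; omega
      refine ⟨⟨(j₀ : ℕ) + 1, by omega⟩, ?_, ?_⟩
      · rw [Finset.mem_filter]
        refine ⟨Finset.mem_univ _, ?_⟩
        rw [Good, dif_pos (show ((⟨(j₀ : ℕ) + 1, by omega⟩ : Fin (m + 2)) : ℕ) < m + 1 from hlt)]
        refine ⟨Nat.succ_pos _, ?_⟩
        have hle : lam ⟨(j₀ : ℕ) + 1, hlt⟩ ≤ v := by
          rw [← hj₀v]
          exact hlam (by rw [Fin.le_def]; simp)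
        have hnmem : lam ⟨(j₀ : ℕ) + 1, hlt⟩ ≠ v := by
          intro he
          have : (⟨(j₀ : ℕ) + 1, hlt⟩ : Fin (m + 1)) ∈ F' := by
            rw [hF', Finset.mem_filter]
            exact ⟨Finset.mem_univ _, he⟩
          have := hj₀max _ this
          rw [Fin.le_def] at this
          simp at this
        have hlt2 : lam ⟨(j₀ : ℕ) + 1, hlt⟩ < lam j₀ := by omega
        convert hlt2 using 2 <;> (apply Fin.ext; simp)
      · convert hj₀v using 2
        exact Fin.ext (by simp)

end Aux

/-- The `sl_{n+1}` Littlewood–Richardson coefficient `c^λ_{λ,μ}` for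
`μ = (2, 1, …, 1) ⊢ n+1` (here `n = m+1`), defined via the crystal tensor-product rule
(Hong–Kang, Theorem 8.6.6): it counts the semistandard tableaux `d ⊗ a₁ ⊗ ⋯ ⊗ aₙ` of
shape `μ` (column `a₁ < ⋯ < aₙ`, extra first-row box `d ≥ a₁`, entries in `[n+1]`)
with `Y[d, a₁, …, aₙ] = Y(λ)`. -/
noncomputable def lrCoeffHook (m : ℕ) (lam : Fin (m + 1) → ℕ) : ℕ :=
  Set.ncard {da : Fin (m + 2) × (Fin (m + 1) → Fin (m + 2)) |
    StrictMono da.2 ∧ da.2 0 ≤ da.1 ∧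
    diagSteps lam (da.1 :: List.ofFn da.2) = some lam}

/-- For `μ = (2, 1, …, 1) ⊢ n+1`, the coefficient `c^λ_{λ,μ}` equals the number of
distinct positive part sizes of `λ`. -/
theorem lr_coeff_counts_distinct_parts (m : ℕ) (lam : Fin (m + 1) → ℕ)
    (hlam : Antitone lam) :
    lrCoeffHook m lam =
      ((Finset.univ.image lam).filter (fun x => 0 < x)).card := by
  classical
  have hlam' : ∀ i j : Fin (m + 1), i ≤ j → lam j ≤ lam i := fun i j h => hlam h
  rw [lrCoeffHook]
  have hset : {da : Fin (m + 2) × (Fin (m + 1) → Fin (m + 2)) |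
      StrictMono da.2 ∧ da.2 0 ≤ da.1 ∧
      diagSteps lam (da.1 :: List.ofFn da.2) = some lam} =
      (fun k : Fin (m + 2) => (k, Fin.succAbove k)) '' {k | Good lam k} := by
    ext ⟨d, a⟩
    simp only [Set.mem_setOf_eq, Set.mem_image]
    constructor
    · rintro ⟨hmono, h0d, hrun⟩
      obtain ⟨k, rfl⟩ := strictMono_eq_succAbove hmono
      obtain ⟨hd, hgood⟩ := good_of_run lam d k h0d hrun
      exact ⟨k, hgood, by rw [hd]⟩
    · rintro ⟨k, hgood, heq⟩
      rw [Prod.ext_iff] at heq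
      obtain ⟨h1, h2⟩ := heq
      simp only at h1 h2
      subst h1
      subst h2
      refine ⟨Fin.strictMono_succAbove k, ?_, ?_⟩
      · rcases Fin.eq_castSucc_or_eq_last k with ⟨k', rfl⟩ | rfl
        · have h0 : 0 < (k' : ℕ) := by
            have := good_pos lam hgood
            simpa using this
          rw [Fin.succAbove_of_castSucc_lt _ _ (by
            rw [Fin.lt_def]; simpa using h0)]
          rw [Fin.castSucc_zero]
          exact Fin.zero_le _
        · rw [Fin.succAbove_last, Fin.castSucc_zero]
          exact Fin.zero_le _
      · rcases Fin.eq_castSucc_or_eq_last k with ⟨k', rfl⟩ | rfl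
        · rw [Good, dif_pos (show ((k'.castSucc : Fin (m + 2)) : ℕ) < m + 1 by rw [Fin.coe_castSucc]; exact k'.isLt)] at hgood
          obtain ⟨h0, hdesc⟩ := hgood
          have e1 : (⟨((k'.castSucc : Fin (m + 2)) : ℕ), by rw [Fin.coe_castSucc]; exact k'.isLt⟩ : Fin (m + 1)) = k' :=
            Fin.ext (by simp)
          apply run_of_good_castSucc lam hlam' k' (by simpa using h0)
          have hdesc2 : lam k' < lam ⟨(k' : ℕ) - 1, by omega⟩ := by
            have hA : lam (⟨((k'.castSucc : Fin (m + 2)) : ℕ), by rw [Fin.coe_castSucc]; exact k'.isLt⟩ : Fin (m + 1)) =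
                lam k' := congrArg lam e1
            have hB : lam (⟨((k'.castSucc : Fin (m + 2)) : ℕ) - 1, by omega⟩ : Fin (m + 1)) =
                lam ⟨(k' : ℕ) - 1, by omega⟩ := congrArg lam (Fin.ext (by simp))
            omega
          exact hdesc2
        · rw [Good, dif_neg (by simp)] at hgood
          exact run_of_good_last lam hlam' hgood
  rw [hset, Set.ncard_image_of_injective _
    (fun a b h => (Prod.ext_iff.mp h).1)]
  have hco : {k | Good lam k} = ↑(Finset.univ.filter fun k => Good lam k) := by
    ext k; simp
  rw [hco, Set.ncard_coe_finset]
  exact good_card lam hlam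
end

section
/- Let L = M ⊕ N be a Lie algebra direct sum of ideals acting on a finite-dimensional simple module V over an algebraically closed field K of characteristic 0, with M minimal. Then there exist a simple M-submodule S of V and a simple N-module T such that V ≅ S ⊗ T as L-modules, where M acts on the first factor and N acts on the second factor. -/
open TensorProduct

section AuxTensorDecomposition
variable {K : Type} [Field K] {E V : Type} [AddCommGroup E] [Module K E]
  [AddCommGroup V] [Module K V]

theorem aux_schur [IsAlgClosed K] [FiniteDimensional K E] [Nontrivial E]
    {A : Type} (ρ : A → Module.End K E)
    (hsimp : ∀ U : Submodule K E, (∀ a, ∀ u ∈ U, ρ a u ∈ U) → U = ⊥ ∨ U = ⊤)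
    (g : Module.End K E) (hg : ∀ a, g ∘ₗ ρ a = ρ a ∘ₗ g) :
    ∃ c : K, g = c • (1 : Module.End K E) := by
  obtain ⟨c, hc⟩ := Module.End.exists_eigenvalue g
  refine ⟨c, ?_⟩
  have h1 : LinearMap.ker (g - c • 1) ≠ ⊥ := by
    rw [Module.End.hasEigenvalue_iff] at hc
    simpa [Module.End.eigenspace_def] using hc
  have hinv : ∀ a, ∀ u ∈ LinearMap.ker (g - c • (1:Module.End K E)),
      ρ a u ∈ LinearMap.ker (g - c • (1:Module.End K E)) := by
    intro a u hu
    rw [LinearMap.mem_ker] at hu ⊢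
    have hcomm := congrArg (fun φ => φ u) (hg a)
    simp only [LinearMap.coe_comp, Function.comp_apply] at hcomm
    simp only [LinearMap.sub_apply, LinearMap.smul_apply, Module.End.one_apply,
      sub_eq_zero] at hu ⊢
    rw [hcomm, hu]
    simp
  have h2 : LinearMap.ker (g - c • (1:Module.End K E)) = ⊤ := by
    rcases hsimp _ hinv with h | h
    · exact absurd h h1
    · exact h
  have := LinearMap.ker_eq_top.mp h2
  ext x
  have := congrArg (fun φ => φ x) this
  simpa [sub_eq_zero] using this

theorem aux_indep [IsAlgClosed K] [FiniteDimensional K E] [Nontrivial E]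
    {A : Type} (ρ : A → Module.End K E) (ρV : A → Module.End K V)
    (hsimp : ∀ U : Submodule K E, (∀ a, ∀ u ∈ U, ρ a u ∈ U) → U = ⊥ ∨ U = ⊤)
    (hschur : ∀ g : Module.End K E, (∀ a, g ∘ₗ ρ a = ρ a ∘ₗ g) →
      ∃ c : K, g = c • (1 : Module.End K E)) :
    ∀ (k : ℕ) (f : Fin k → E →ₗ[K] V),
      (∀ i a, (f i) ∘ₗ ρ a = ρV a ∘ₗ f i) → LinearIndependent K f →
      ∀ s : Fin k → E, (∑ i, f i (s i)) = 0 → ∀ i, s i = 0 := by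
  intro k
  induction k with
  | zero => intro f _ _ s _ i; exact absurd i.2 (by omega)
  | succ k IH =>
    intro f hequi hindep s hsum
    -- the tail lemma
    have tail : ∀ t : Fin (k+1) → E, t 0 = 0 → (∑ i, f i (t i)) = 0 → ∀ i, t i = 0 := by
      intro t ht0 htsum
      have hsum' : (∑ i : Fin k, (f ∘ Fin.succ) i ((t ∘ Fin.succ) i)) = 0 := by
        rw [Fin.sum_univ_succ, ht0] at htsum
        simpa using htsum
      have htail := IH (f ∘ Fin.succ)
        (fun i a => hequi i.succ a) (hindep.comp Fin.succ (Fin.succ_injective k))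
        (t ∘ Fin.succ) hsum'
      intro i
      refine Fin.cases ht0 (fun j => htail j) i
    by_cases hs0 : s 0 = 0
    · exact tail s hs0 hsum
    -- the minimal invariant subspace containing s
    exfalso
    set D : A → Module.End K (Fin (k+1) → E) := fun a => (ρ a).compLeft (Fin (k+1)) with hD
    set Q : Submodule K (Fin (k+1) → E) :=
      sInf {W | (∀ a, ∀ u ∈ W, D a u ∈ W) ∧ s ∈ W} with hQ
    have hsQ : s ∈ Q := Submodule.mem_sInf.2 fun W hW => hW.2
    have hQinv : ∀ a, ∀ u ∈ Q, D a u ∈ Q := fun a u hu =>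
      Submodule.mem_sInf.2 fun W hW => hW.1 a u (Submodule.mem_sInf.1 hu W hW)
    have hQmin : ∀ W : Submodule K (Fin (k+1) → E),
        (∀ a, ∀ u ∈ W, D a u ∈ W) → s ∈ W → Q ≤ W := fun W h1 h2 => sInf_le ⟨h1, h2⟩
    -- Q is inside the kernel of the total evaluation
    set F : (Fin (k+1) → E) →ₗ[K] V := ∑ i, (f i) ∘ₗ (LinearMap.proj i) with hF
    have hFapp : ∀ u, F u = ∑ i, f i (u i) := by
      intro u; simp [hF]
    have hQker : ∀ u ∈ Q, (∑ i, f i (u i)) = 0 := by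
      have : Q ≤ LinearMap.ker F := by
        refine hQmin _ ?_ ?_
        · intro a u hu
          rw [LinearMap.mem_ker] at hu ⊢
          rw [hFapp] at hu ⊢
          have : ∀ i, f i (D a u i) = ρV a (f i (u i)) := by
            intro i
            have := congrArg (fun φ => φ (u i)) (hequi i a)
            simpa [hD, LinearMap.compLeft_apply] using this
          simp only [this, ← map_sum, hu, map_zero]
        · rw [LinearMap.mem_ker, hFapp]; exact hsum
      intro u hu; have := this hu; rwa [LinearMap.mem_ker, hFapp] at this
    -- projection to coordinate 0 is injective on Q
    set p : ↥Q →ₗ[K] E := (LinearMap.proj 0) ∘ₗ Q.subtype with hp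
    have hpinj : Function.Injective p := by
      rw [← LinearMap.ker_eq_bot]
      rw [LinearMap.ker_eq_bot']
      intro u hu0
      have h0 : (u : Fin (k+1) → E) 0 = 0 := hu0
      have := tail u h0 (hQker u u.2)
      ext i
      simp [this i]
    have hrinv : ∀ a, ∀ x ∈ LinearMap.range p, ρ a x ∈ LinearMap.range p := by
      rintro a x ⟨u, rfl⟩
      refine ⟨⟨D a u, hQinv a u u.2⟩, ?_⟩
      simp [hp, hD, LinearMap.compLeft_apply]
    have hpsurj : Function.Surjective p := by
      rw [← LinearMap.range_eq_top]
      rcases hsimp (LinearMap.range p) hrinv with h | h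
      · exfalso
        apply hs0
        have hmem : p ⟨s, hsQ⟩ ∈ LinearMap.range p := LinearMap.mem_range_self _ _
        rw [h] at hmem
        simpa [hp] using (Submodule.mem_bot K).1 hmem
      · exact h
    set pe : ↥Q ≃ₗ[K] E := LinearEquiv.ofBijective p ⟨hpinj, hpsurj⟩ with hpe
    have hpe_apply : ∀ u : ↥Q, pe u = (u : Fin (k+1) → E) 0 := fun u => rfl
    -- restricted action on Q
    have hQres : ∀ a u, u ∈ Q → D a u ∈ Q := fun a u hu => hQinv a u hu
    set ρQ : A → Module.End K ↥Q := fun a => (D a).restrict (hQres a) with hρQ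
    have hρQ_apply : ∀ a (u : ↥Q), ((ρQ a u : Fin (k+1) → E)) = D a u := fun a u => rfl
    -- pe.symm equivariant
    have hpe_equi : ∀ a x, pe.symm (ρ a x) = ρQ a (pe.symm x) := by
      intro a x
      apply hpinj
      show pe _ = pe _
      rw [LinearEquiv.apply_symm_apply, hpe_apply, hρQ_apply]
      have : D a (pe.symm x) 0 = ρ a ((pe.symm x : Fin (k+1) → E) 0) := by
        simp [hD, LinearMap.compLeft_apply]
      rw [this, ← hpe_apply, LinearEquiv.apply_symm_apply]
    -- coordinate endomorphisms
    set g : Fin (k+1) → Module.End K E := fun i =>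
      (LinearMap.proj i) ∘ₗ Q.subtype ∘ₗ (pe.symm : E →ₗ[K] ↥Q) with hg
    have hg_apply : ∀ i x, g i x = (pe.symm x : Fin (k+1) → E) i := fun i x => rfl
    have hgcomm : ∀ i a, g i ∘ₗ ρ a = ρ a ∘ₗ g i := by
      intro i a
      ext x
      simp only [LinearMap.coe_comp, Function.comp_apply]
      rw [hg_apply, hg_apply, hpe_equi, hρQ_apply]
      simp [hD, LinearMap.compLeft_apply]
    choose c hc using fun i => hschur (g i) (hgcomm i)
    have hpes : pe.symm (s 0) = ⟨s, hsQ⟩ := by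
      apply hpinj
      show pe _ = pe _
      rw [LinearEquiv.apply_symm_apply, hpe_apply]
    have hsc : ∀ i, s i = c i • s 0 := by
      intro i
      have := hg_apply i (s 0)
      rw [hpes] at this
      rw [hc i] at this
      simpa using this.symm
    have hc0 : c 0 = 1 := by
      have h1 := hsc 0
      have : (c 0 - 1) • s 0 = 0 := by
        rw [sub_smul, one_smul, ← h1, sub_self]
      rcases smul_eq_zero.1 this with h | h
      · exact sub_eq_zero.1 h
      · exact absurd h hs0
    -- the linear relation
    have hrel : (∑ i, c i • f i) = 0 := by
      ext x
      have hx : (pe.symm x : Fin (k+1) → E) ∈ Q := (pe.symm x).2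
      have h1 := hQker _ hx
      have h2 : ∀ i, (pe.symm x : Fin (k+1) → E) i = c i • x := by
        intro i
        rw [← hg_apply, hc i]
        simp
      simp only [h2] at h1
      simpa [map_smul] using h1
    have := Fintype.linearIndependent_iff.1 hindep c (by simpa using hrel) 0
    rw [hc0] at this
    exact one_ne_zero this

end AuxTensorDecomposition

set_option maxHeartbeats 3000000 in
set_option synthInstance.maxHeartbeats 400000 in
/-- Over an algebraically closed field of characteristic `0`: if `L = M ⊕ N` is a direct
sum of ideals with `M` minimal and `V` is a finite-dimensional simple `L`-module, then
there are a simple `M`-submodule `S ≤ V` and a simple `N`-module `T` with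
`V ≅ S ⊗ T` as `L`-modules, `M` acting on the first factor and `N` on the second. -/
theorem tensor_decomposition
    {K : Type} [Field K] [IsAlgClosed K] [CharZero K]
    {L : Type} [LieRing L] [LieAlgebra K L] [FiniteDimensional K L]
    {V : Type} [AddCommGroup V] [Module K V] [FiniteDimensional K V]
    [LieRingModule L V] [LieModule K L V]
    (M N : LieIdeal K L) (hMN : IsCompl M N)
    (hMne : M ≠ ⊥) (hMmin : ∀ I : LieIdeal K L, I ≤ M → I = ⊥ ∨ I = M)
    (hVnt : Nontrivial V)
    (hVsimple : ∀ U : Submodule K V, (∀ x : L, ∀ u ∈ U, ⁅x, u⁆ ∈ U) → U = ⊥ ∨ U = ⊤) :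
    ∃ S : Submodule K V,
      -- `S` is a simple `M`-submodule of `V`
      LieIdealInvariant M S ∧ S ≠ ⊥ ∧
      (∀ U : Submodule K V, U ≤ S → LieIdealInvariant M U → U = ⊥ ∨ U = S) ∧
      -- a simple `N`-module `T = K^d` via a representation `σ`
      ∃ (d : ℕ) (σ : L → Module.End K (Fin d → K)), 0 < d ∧
        (∀ U : Submodule K (Fin d → K),
          (∀ n ∈ N, ∀ u ∈ U, σ n u ∈ U) → U = ⊥ ∨ U = ⊤) ∧
      -- `V ≅ S ⊗ T` as `L`-modules
      ∃ (ρ : L → Module.End K S) (e : V ≃ₗ[K] (S ⊗[K] (Fin d → K))),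
        (∀ m ∈ M, ∀ s : S, ((ρ m s : S) : V) = ⁅m, (s : V)⁆) ∧
        (∀ m ∈ M, ∀ v : V, e ⁅m, v⁆ = TensorProduct.map (ρ m) LinearMap.id (e v)) ∧
        (∀ n ∈ N, ∀ v : V, e ⁅n, v⁆ = TensorProduct.map LinearMap.id (σ n) (e v)) := by
  classical
  -- brackets between M and N vanish
  have hzero : ∀ m ∈ M, ∀ n ∈ N, ⁅m, n⁆ = (0 : L) := by
    intro m hm n hn
    have h1 : ⁅m, n⁆ ∈ N := N.lie_mem hn
    have h2 : ⁅m, n⁆ ∈ M := by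
      have h3 : ⁅n, m⁆ ∈ M := M.lie_mem hm
      have h4 : -⁅n, m⁆ ∈ M := neg_mem h3
      rwa [lie_skew] at h4
    have h5 : ⁅m, n⁆ ∈ M ⊓ N := (LieSubmodule.mem_inf M N _).2 ⟨h2, h1⟩
    rw [hMN.inf_eq_bot] at h5
    exact (LieSubmodule.mem_bot _).1 h5
  have hcomm : ∀ m ∈ M, ∀ n ∈ N, ∀ v : V, ⁅m, ⁅n, v⁆⁆ = ⁅n, ⁅m, v⁆⁆ := by
    intro m hm n hn v
    have := lie_lie m n v
    rw [hzero m hm n hn, zero_lie] at this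
    exact sub_eq_zero.1 this.symm
  -- find a minimal nonzero M-invariant submodule S
  have hex : ∃ k : ℕ, ∃ U : Submodule K V, U ≠ ⊥ ∧ LieIdealInvariant M U ∧
      Module.finrank K U = k :=
    ⟨Module.finrank K (⊤ : Submodule K V), ⊤, Ne.symm bot_ne_top,
      fun _ _ _ _ => Submodule.mem_top, rfl⟩
  obtain ⟨S, hSne, hSinv, hSrank⟩ := Nat.find_spec hex
  have hSmin : ∀ U : Submodule K V, U ≠ ⊥ → LieIdealInvariant M U →
      Nat.find hex ≤ Module.finrank K U := fun U h1 h2 => Nat.find_le ⟨U, h1, h2, rfl⟩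
  have hS3 : ∀ U : Submodule K V, U ≤ S → LieIdealInvariant M U → U = ⊥ ∨ U = S := by
    intro U hle hinv
    by_cases h : U = ⊥
    · exact Or.inl h
    · exact Or.inr (Submodule.eq_of_le_of_finrank_le hle (hSrank ▸ hSmin U h hinv))
  haveI hSnt : Nontrivial ↥S := Submodule.nontrivial_iff_ne_bot.mpr hSne
  -- the restricted action of M on S
  have hSmap : ∀ m : ↥M, ∀ v ∈ S, (LieModule.toEnd K L V ↑m) v ∈ S := by
    intro m v hv
    rw [LieModule.toEnd_apply_apply]
    exact hSinv ↑m m.2 v hv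
  set ρS : ↥M → Module.End K ↥S :=
    fun m => (LieModule.toEnd K L V ↑m).restrict (hSmap m) with hρSdef
  have hρS : ∀ (m : ↥M) (s : ↥S), ((ρS m s : ↥S) : V) = ⁅(m : L), (s : V)⁆ := by
    intro m s
    rw [hρSdef]
    rw [LinearMap.restrict_coe_apply, LieModule.toEnd_apply_apply]
  -- S is simple for the restricted action
  have hsimpS : ∀ U : Submodule K ↥S, (∀ a, ∀ u ∈ U, ρS a u ∈ U) → U = ⊥ ∨ U = ⊤ := by
    intro U hUinv
    have hinj := Submodule.map_injective_of_injective (Submodule.injective_subtype S)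
    have hinv' : LieIdealInvariant M (U.map S.subtype) := by
      rintro m hm _ ⟨u, hu, rfl⟩
      exact ⟨ρS ⟨m, hm⟩ u, hUinv _ u hu, hρS ⟨m, hm⟩ u⟩
    rcases hS3 _ (Submodule.map_subtype_le S U) hinv' with h | h
    · left; apply hinj; rw [h, Submodule.map_bot]
    · right; apply hinj; rw [h, Submodule.map_top, Submodule.range_subtype]
  have hschurS := fun g hg => aux_schur ρS hsimpS g hg
  -- the space T of M-equivariant maps S → V
  set T : Submodule K (↥S →ₗ[K] V) :=
    { carrier := {f | ∀ m : ↥M, f ∘ₗ ρS m = (LieModule.toEnd K L V ↑m) ∘ₗ f}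
      add_mem' := fun hf hg m => by
        rw [LinearMap.add_comp, LinearMap.comp_add, hf m, hg m]
      zero_mem' := fun m => by rw [LinearMap.zero_comp, LinearMap.comp_zero]
      smul_mem' := fun c f hf m => by
        rw [LinearMap.smul_comp, LinearMap.comp_smul, hf m] } with hTdef
  have hmemT : ∀ f : ↥S →ₗ[K] V, f ∈ T ↔
      (∀ m : ↥M, f ∘ₗ ρS m = (LieModule.toEnd K L V ↑m) ∘ₗ f) := fun f => Iff.rfl
  have hTapp : ∀ f ∈ T, ∀ (m : ↥M) (s : ↥S), f (ρS m s) = ⁅(m : L), f s⁆ := by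
    intro f hf m s
    have h := congrArg (fun φ : ↥S →ₗ[K] V => φ s) ((hmemT f).1 hf m)
    simpa [LieModule.toEnd_apply_apply] using h
  -- the inclusion S → V belongs to T
  have hι : S.subtype ∈ T := by
    rw [hmemT]
    intro m
    ext s
    simp only [LinearMap.coe_comp, Function.comp_apply, Submodule.coe_subtype,
      LieModule.toEnd_apply_apply]
    exact hρS m s
  -- T is stable under composition with elements of N
  have hTN : ∀ x : L, x ∈ N → ∀ f ∈ T, (LieModule.toEnd K L V x) ∘ₗ f ∈ T := by
    intro x hx f hf
    rw [hmemT]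
    intro m
    ext s
    simp only [LinearMap.coe_comp, Function.comp_apply, LieModule.toEnd_apply_apply]
    rw [hTapp f hf m s]
    exact (hcomm ↑m m.2 x hx (f s)).symm
  -- basis of T
  haveI hTnt : Nontrivial ↥T := by
    refine nontrivial_of_ne ⟨S.subtype, hι⟩ 0 ?_
    intro h
    obtain ⟨s0, hs0⟩ := exists_ne (0 : ↥S)
    have h2 : S.subtype s0 = 0 := by
      have := congrArg (fun t : ↥T => ((t : ↥S →ₗ[K] V)) s0) h
      simpa using this
    exact hs0 (by simpa [Submodule.coe_eq_zero] using h2)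
  set d : ℕ := Module.finrank K ↥T with hddef
  have hd : 0 < d := Module.finrank_pos
  set b : Module.Basis (Fin d) K ↥T := Module.finBasis K ↥T with hbdef
  set fb : Fin d → (↥S →ₗ[K] V) := fun i => ((b i : ↥T) : ↥S →ₗ[K] V) with hfbdef
  have hfbT : ∀ i, fb i ∈ T := fun i => (b i).2
  have hfequi : ∀ (i : Fin d) (m : ↥M),
      fb i ∘ₗ ρS m = (LieModule.toEnd K L V ↑m) ∘ₗ fb i := fun i m => (hmemT _).1 (hfbT i) m
  have hfb_indep : LinearIndependent K fb := by
    have h1 := b.linearIndependent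
    have h2 := h1.map' T.subtype (Submodule.ker_subtype T)
    exact h2
  -- the isomorphism candidate E' : S ⊗ K^d → V
  set E'bil : ↥S →ₗ[K] (Fin d → K) →ₗ[K] V :=
    LinearMap.mk₂ K (fun s c => ∑ i, c i • fb i s)
      (fun s s' c => by simp [map_add, smul_add, Finset.sum_add_distrib])
      (fun a s c => by
        simp only [map_smul]
        rw [Finset.smul_sum]
        exact Finset.sum_congr rfl fun i _ => smul_comm _ _ _)
      (fun s c c' => by simp [add_smul, Finset.sum_add_distrib])
      (fun a s c => by
        rw [Finset.smul_sum]
        exact Finset.sum_congr rfl fun i _ => by simp [Pi.smul_apply, mul_smul]) with hE'bil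
  set E' : (↥S ⊗[K] (Fin d → K)) →ₗ[K] V := TensorProduct.lift E'bil with hE'def
  have hE'tmul : ∀ (s : ↥S) (c : Fin d → K), E' (s ⊗ₜ[K] c) = ∑ i, c i • fb i s := by
    intro s c
    rw [hE'def]
    simp [TensorProduct.lift.tmul, hE'bil]
  have hE'c : ∀ (s : ↥S) (c : Fin d → K),
      E' (s ⊗ₜ[K] c) = ((b.equivFun.symm c : ↥T) : ↥S →ₗ[K] V) s := by
    intro s c
    rw [hE'tmul, Module.Basis.equivFun_symm_apply]
    simp only [AddSubmonoidClass.coe_finset_sum, SetLike.val_smul, LinearMap.coe_sum,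
      Finset.sum_apply, LinearMap.smul_apply]
    rfl
  -- complementary projections
  have hcompl' : IsCompl (LieSubmodule.toSubmodule M) (LieSubmodule.toSubmodule N) := by
    refine IsCompl.of_eq ?_ ?_
    · rw [← LieSubmodule.inf_toSubmodule, hMN.inf_eq_bot, LieSubmodule.bot_toSubmodule]
    · rw [← LieSubmodule.sup_toSubmodule, hMN.sup_eq_top, LieSubmodule.top_toSubmodule]
  set πN : L →ₗ[K] ↥(LieSubmodule.toSubmodule N) :=
    (LieSubmodule.toSubmodule N).linearProjOfIsCompl (LieSubmodule.toSubmodule M)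
      hcompl'.symm with hπNdef
  have hπN : ∀ x : L, x ∈ N → ((πN x : L)) = x := by
    intro x hx
    rw [hπNdef]
    exact congrArg Subtype.val
      (Submodule.linearProjOfIsCompl_apply_left hcompl'.symm ⟨x, hx⟩)
  set πM : L →ₗ[K] ↥(LieSubmodule.toSubmodule M) :=
    (LieSubmodule.toSubmodule M).linearProjOfIsCompl (LieSubmodule.toSubmodule N)
      hcompl' with hπMdef
  have hπM : ∀ x : L, x ∈ M → ((πM x : L)) = x := by
    intro x hx
    rw [hπMdef]
    exact congrArg Subtype.val
      (Submodule.linearProjOfIsCompl_apply_left hcompl' ⟨x, hx⟩)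
  -- the action of L (through N) on T and the matrix representation σ
  set θ : L → Module.End K ↥T := fun x =>
    (LinearMap.llcomp K ↥S V V (LieModule.toEnd K L V ↑(πN x))).restrict
      (fun f hf => hTN _ ((LieSubmodule.mem_toSubmodule N).1 (πN x).2) f hf) with hθdef
  have hθcoe : ∀ (x : L) (t : ↥T),
      ((θ x t : ↥T) : ↥S →ₗ[K] V) = (LieModule.toEnd K L V ↑(πN x)) ∘ₗ (t : ↥S →ₗ[K] V) := by
    intro x t
    rfl
  set σ : L → Module.End K (Fin d → K) := fun x =>
    b.equivFun.toLinearMap ∘ₗ (θ x) ∘ₗ b.equivFun.symm.toLinearMap with hσdef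
  have hσ : ∀ (x : L) (t : ↥T), σ x (b.equivFun t) = b.equivFun (θ x t) := by
    intro x t
    rw [hσdef]
    simp only [LinearMap.coe_comp, LinearEquiv.coe_coe, Function.comp_apply,
      LinearEquiv.symm_apply_apply]
  -- the M-side intertwining property of E'
  have hEM : ∀ (m : L) (hm : m ∈ M) (z : ↥S ⊗[K] (Fin d → K)),
      ⁅m, E' z⁆ = E' (TensorProduct.map (ρS ⟨m, hm⟩) LinearMap.id z) := by
    intro m hm z
    induction z using TensorProduct.induction_on with
    | zero => simp
    | tmul s c =>
      rw [TensorProduct.map_tmul, hE'tmul, hE'tmul, LinearMap.id_coe, id_eq]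
      rw [← LieModule.toEnd_apply_apply K L V m, map_sum]
      refine Finset.sum_congr rfl fun i _ => ?_
      rw [map_smul, LieModule.toEnd_apply_apply]
      rw [← hTapp (fb i) (hfbT i) ⟨m, hm⟩ s]
    | add x y hx hy => rw [map_add, lie_add, hx, hy, map_add, map_add]
  -- the N-side intertwining property of E'
  have hEN : ∀ (n : L) (hn : n ∈ N) (z : ↥S ⊗[K] (Fin d → K)),
      ⁅n, E' z⁆ = E' (TensorProduct.map LinearMap.id (σ n) z) := by
    intro n hn z
    induction z using TensorProduct.induction_on with
    | zero => simp
    | tmul s c =>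
      rw [TensorProduct.map_tmul, LinearMap.id_coe, id_eq]
      have h1 : σ n c = b.equivFun (θ n (b.equivFun.symm c)) := by
        conv_lhs => rw [← b.equivFun.apply_symm_apply c]
        exact hσ n _
      rw [h1, hE'c s c, hE'c s (b.equivFun ((θ n) (b.equivFun.symm c))),
        LinearEquiv.symm_apply_apply, hθcoe]
      rw [LinearMap.comp_apply, hπN n hn, LieModule.toEnd_apply_apply]
    | add x y hx hy => rw [map_add, lie_add, hx, hy, map_add, map_add]
  -- injectivity of E'
  have hrep : ∀ z : ↥S ⊗[K] (Fin d → K),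
      ∃ g : Fin d → ↥S, z = ∑ i, (g i) ⊗ₜ[K] (Pi.single i (1 : K)) := by
    intro z
    induction z using TensorProduct.induction_on with
    | zero => exact ⟨0, by simp⟩
    | tmul s c =>
      refine ⟨fun i => c i • s, ?_⟩
      conv_lhs => rw [← Finset.univ_sum_single c]
      rw [TensorProduct.tmul_sum]
      refine Finset.sum_congr rfl fun i _ => ?_
      have h1 : (Pi.single i (c i) : Fin d → K) = c i • (Pi.single i (1 : K) : Fin d → K) := by
        rw [← Pi.single_smul, smul_eq_mul, mul_one]
      rw [h1, TensorProduct.tmul_smul, TensorProduct.smul_tmul']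
    | add x y hx hy =>
      obtain ⟨g, rfl⟩ := hx
      obtain ⟨g', rfl⟩ := hy
      exact ⟨g + g', by simp [TensorProduct.add_tmul, Finset.sum_add_distrib]⟩
  have hE'single : ∀ g : Fin d → ↥S,
      E' (∑ i, (g i) ⊗ₜ[K] (Pi.single i (1 : K))) = ∑ i, fb i (g i) := by
    intro g
    rw [map_sum]
    refine Finset.sum_congr rfl fun i _ => ?_
    rw [hE'tmul]
    rw [Finset.sum_eq_single i]
    · rw [Pi.single_eq_same, one_smul]
    · intro j _ hj
      rw [Pi.single_eq_of_ne hj, zero_smul]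
    · intro h
      exact absurd (Finset.mem_univ i) h
  have hE'inj : Function.Injective E' := by
    rw [← LinearMap.ker_eq_bot, LinearMap.ker_eq_bot']
    intro z hz
    obtain ⟨g, rfl⟩ := hrep z
    rw [hE'single] at hz
    have hall := aux_indep ρS (fun m => LieModule.toEnd K L V ↑m) hsimpS hschurS d fb
      hfequi hfb_indep g hz
    refine Finset.sum_eq_zero fun i _ => ?_
    rw [hall i, TensorProduct.zero_tmul]
  -- surjectivity of E'
  have hrange : ∀ f ∈ T, ∀ s : ↥S, f s ∈ LinearMap.range E' := by
    intro f hf s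
    refine ⟨s ⊗ₜ[K] b.equivFun ⟨f, hf⟩, ?_⟩
    rw [hE'c, LinearEquiv.symm_apply_apply]
  have hE'surj : Function.Surjective E' := by
    rw [← LinearMap.range_eq_top]
    have hinvr : ∀ x : L, ∀ v ∈ LinearMap.range E', ⁅x, v⁆ ∈ LinearMap.range E' := by
      rintro x _ ⟨z, rfl⟩
      have hxmem : x ∈ M ⊔ N := by rw [hMN.sup_eq_top]; exact LieSubmodule.mem_top x
      obtain ⟨m, hm, n, hn, rfl⟩ := (LieSubmodule.mem_sup M N x).1 hxmem
      rw [add_lie, hEM m hm z, hEN n hn z]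
      exact add_mem (LinearMap.mem_range_self _ _) (LinearMap.mem_range_self _ _)
    rcases hVsimple _ hinvr with h | h
    · exfalso
      obtain ⟨s0, hs0⟩ := exists_ne (0 : ↥S)
      have h1 : S.subtype s0 ∈ LinearMap.range E' := hrange _ hι s0
      rw [h] at h1
      have h2 : S.subtype s0 = 0 := (Submodule.mem_bot K).1 h1
      exact hs0 (by simpa [Submodule.coe_eq_zero] using h2)
    · exact h
  have hbij : Function.Bijective E' := ⟨hE'inj, hE'surj⟩
  set eq' : (↥S ⊗[K] (Fin d → K)) ≃ₗ[K] V := LinearEquiv.ofBijective E' hbij with heq'def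
  set e : V ≃ₗ[K] (↥S ⊗[K] (Fin d → K)) := eq'.symm with hedef
  have hesymm : ∀ z, e.symm z = E' z := by
    intro z
    rw [hedef, LinearEquiv.symm_symm, heq'def, LinearEquiv.ofBijective_apply]
  have heE' : ∀ v : V, E' (e v) = v := by
    intro v
    rw [← hesymm, LinearEquiv.symm_apply_apply]
  have heE2 : ∀ z, e (E' z) = z := by
    intro z
    rw [← hesymm, LinearEquiv.apply_symm_apply]
  clear_value ρS T b fb E'bil E' θ σ πN πM eq' e
  -- simplicity of the N-module K^d
  have hTsimp : ∀ U : Submodule K (Fin d → K),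
      (∀ n ∈ N, ∀ u ∈ U, σ n u ∈ U) → U = ⊥ ∨ U = ⊤ := by
    intro U hUinv
    by_cases hUbot : U = ⊥
    · exact Or.inl hUbot
    right
    set Ut : Submodule K ↥T := U.comap b.equivFun.toLinearMap with hUtdef
    have hUtmem : ∀ t : ↥T, t ∈ Ut ↔ b.equivFun t ∈ U := fun t => Iff.rfl
    have hUtinv : ∀ x : L, x ∈ N → ∀ t ∈ Ut, θ x t ∈ Ut := by
      intro x hx t ht
      rw [hUtmem, ← hσ x t]
      exact hUinv x hx _ ((hUtmem t).1 ht)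
    have hUtne : Ut ≠ ⊥ := by
      obtain ⟨c, hcU, hc0⟩ := (Submodule.ne_bot_iff U).1 hUbot
      refine (Submodule.ne_bot_iff Ut).2 ⟨b.equivFun.symm c, ?_, ?_⟩
      · rw [hUtmem, LinearEquiv.apply_symm_apply]; exact hcU
      · intro h
        apply hc0
        rw [← LinearEquiv.apply_symm_apply b.equivFun c, h, map_zero]
    -- the span of all values of elements of Ut is L-invariant, hence all of V
    set gens : Set V := {v | ∃ t : ↥T, t ∈ Ut ∧ ∃ s : ↥S, ((t : ↥S →ₗ[K] V)) s = v}
      with hgensdef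
    set W : Submodule K V := Submodule.span K gens with hWdef
    have hWinv : ∀ x : L, ∀ w ∈ W, ⁅x, w⁆ ∈ W := by
      intro x w hw
      have hxmem : x ∈ M ⊔ N := by rw [hMN.sup_eq_top]; exact LieSubmodule.mem_top x
      obtain ⟨m, hm, n, hn, rfl⟩ := (LieSubmodule.mem_sup M N x).1 hxmem
      induction hw using Submodule.span_induction with
      | mem v hv =>
        obtain ⟨t, ht, s, rfl⟩ := hv
        have h1 : ⁅m, (t : ↥S →ₗ[K] V) s⁆ = (t : ↥S →ₗ[K] V) (ρS ⟨m, hm⟩ s) :=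
          (hTapp _ t.2 ⟨m, hm⟩ s).symm
        have h2 : ⁅n, (t : ↥S →ₗ[K] V) s⁆ = ((θ n t : ↥T) : ↥S →ₗ[K] V) s := by
          rw [hθcoe, LinearMap.comp_apply, hπN n hn, LieModule.toEnd_apply_apply]
        rw [add_lie, h1, h2]
        refine add_mem (Submodule.subset_span ⟨t, ht, _, rfl⟩)
          (Submodule.subset_span ⟨θ n t, hUtinv n hn t ht, s, rfl⟩)
      | zero => rw [lie_zero]; exact zero_mem W
      | add v v' _ _ hv hv' => rw [lie_add]; exact add_mem hv hv'
      | smul a v _ hv => rw [lie_smul]; exact Submodule.smul_mem W a hv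
    have hWtop : W = ⊤ := by
      rcases hVsimple W hWinv with h | h
      · exfalso
        obtain ⟨t, htU, ht0⟩ := (Submodule.ne_bot_iff Ut).1 hUtne
        have ht0' : ((t : ↥S →ₗ[K] V)) ≠ 0 := by
          intro hc
          exact ht0 (by ext : 1; exact hc)
        obtain ⟨s, hs⟩ : ∃ s : ↥S, (t : ↥S →ₗ[K] V) s ≠ 0 := by
          by_contra hc
          push_neg at hc
          exact ht0' (LinearMap.ext hc)
        have : (t : ↥S →ₗ[K] V) s ∈ W := Submodule.subset_span ⟨t, htU, s, rfl⟩
        rw [h] at this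
        exact hs ((Submodule.mem_bot K).1 this)
      · exact h
    -- dimension count
    set j : ℕ := Module.finrank K ↥Ut with hjdef
    haveI : Module.Free K ↥Ut := Module.Free.of_divisionRing K ↥Ut
    set bu : Module.Basis (Fin j) K ↥Ut := Module.finBasis K ↥Ut with hbudef
    set ΦU : (Fin j → ↥S) →ₗ[K] V :=
      ∑ i, (((bu i : ↥Ut) : ↥T) : ↥S →ₗ[K] V) ∘ₗ LinearMap.proj i with hΦUdef
    have hΦUapp : ∀ g : Fin j → ↥S,
        ΦU g = ∑ i, (((bu i : ↥Ut) : ↥T) : ↥S →ₗ[K] V) (g i) := by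
      intro g
      rw [hΦUdef]
      simp
    have hgens_sub : gens ⊆ (LinearMap.range ΦU : Set V) := by
      rintro v ⟨t, ht, s, rfl⟩
      refine ⟨fun i => bu.equivFun ⟨t, ht⟩ i • s, ?_⟩
      rw [hΦUapp]
      have h1 : (⟨t, ht⟩ : ↥Ut) = ∑ i, bu.equivFun ⟨t, ht⟩ i • bu i :=
        (bu.sum_equivFun _).symm
      have h2 := congrArg (fun u : ↥Ut => (((u : ↥T) : ↥S →ₗ[K] V)) s) h1
      simp only [AddSubmonoidClass.coe_finset_sum, SetLike.val_smul, LinearMap.coe_sum,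
        Finset.sum_apply, LinearMap.smul_apply] at h2
      refine Eq.trans (Finset.sum_congr rfl fun i _ => map_smul _ _ _) ?_
      exact h2.symm
    have hrange_top : LinearMap.range ΦU = ⊤ := by
      rw [eq_top_iff, ← hWtop, hWdef]
      exact Submodule.span_le.2 hgens_sub
    have hdim1 : Module.finrank K V ≤ j * Module.finrank K ↥S := by
      have h1 : Module.finrank K V = Module.finrank K ↥(LinearMap.range ΦU) := by
        rw [hrange_top, finrank_top]
      have h2 := ΦU.finrank_range_le
      have h3 : Module.finrank K (Fin j → ↥S) = j * Module.finrank K ↥S := by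
        rw [Module.finrank_pi_fintype]
        simp [Finset.sum_const, mul_comm]
      rw [h1]
      rw [h3] at h2
      exact h2
    have hdim2 : Module.finrank K V = Module.finrank K ↥S * d := by
      have h1 := LinearEquiv.finrank_eq eq'
      rw [← h1, Module.finrank_tensorProduct, Module.finrank_pi, Fintype.card_fin]
    have hSpos : 0 < Module.finrank K ↥S := Module.finrank_pos
    have hdj : d ≤ j := by
      rw [hdim2] at hdim1
      have : Module.finrank K ↥S * d ≤ Module.finrank K ↥S * j := by
        calc Module.finrank K ↥S * d ≤ j * Module.finrank K ↥S := hdim1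
        _ = Module.finrank K ↥S * j := mul_comm _ _
      exact Nat.le_of_mul_le_mul_left this hSpos
    have hUt_top : Ut = ⊤ := by
      apply Submodule.eq_top_of_finrank_eq
      refine le_antisymm (Submodule.finrank_le Ut) ?_
      rw [← hddef] at *
      exact hdj
    rw [Submodule.eq_top_iff']
    intro c
    have h1 : b.equivFun.symm c ∈ Ut := by rw [hUt_top]; exact Submodule.mem_top
    have h2 := (hUtmem _).1 h1
    rwa [LinearEquiv.apply_symm_apply] at h2
  -- final assembly
  set ρ : L → Module.End K ↥S :=
    fun x => ρS ⟨↑(πM x), (LieSubmodule.mem_toSubmodule M).1 (πM x).2⟩ with hρdef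
  have hρeq : ∀ m : L, ∀ hm : m ∈ M, ρ m = ρS ⟨m, hm⟩ := by
    intro m hm
    rw [hρdef]
    exact congrArg ρS (Subtype.ext (hπM m hm))
  refine ⟨S, hSinv, hSne, hS3, d, σ, hd, hTsimp, ρ, e, ?_, ?_, ?_⟩
  · intro m hm s
    rw [hρeq m hm]
    exact hρS ⟨m, hm⟩ s
  · intro m hm v
    rw [hρeq m hm]
    conv_lhs => rw [← heE' v]
    rw [hEM m hm (e v), heE2]
  · intro n hn v
    conv_lhs => rw [← heE' v]
    rw [hEN n hn (e v), heE2]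
end
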